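/- Let D be a real symmetric bilinear form on a real vector space of symmetric 4×4 tensors, defined by D(h,k) := -(1/2)·(Σ_{μρ,νσ} η_{μρ}η_{νσ} h^{μν}k^{ρσ} + η_{νρ}η_{μσ} h^{μν}k^{ρσ} - η_{μν}η_{ρσ} h^{μν}k^{ρσ}) where η = diag(1,-1,-1,-1). Then D is non-degenerate on the 10-dimensional space of symmetric tensors. -/

import Mathlib

set_option maxHeartbeats 1600000 in
theorem stmt_16
    (η : Fin 4 → Fin 4 → ℝ)
    (hη : η = fun μ ν => if μ = ν then (if μ = 0 then 1 else -1) else 0)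
    (D : Matrix (Fin 4) (Fin 4) ℝ → Matrix (Fin 4) (Fin 4) ℝ → ℝ)
    (hD : ∀ h k, D h k = -(1 / 2) *
      ∑ μ, ∑ ν, ∑ ρ, ∑ σ,
        (η μ ρ * η ν σ + η ν ρ * η μ σ - η μ ν * η ρ σ) * h μ ν * k ρ σ) :
    ∀ h : Matrix (Fin 4) (Fin 4) ℝ, h.IsSymm →
      (∀ k : Matrix (Fin 4) (Fin 4) ℝ, k.IsSymm → D h k = 0) → h = 0 := by
  subst hη
  intro h hsym hk
  have hs : ∀ i j : Fin 4, h j i = h i j := by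
    intro i j
    have := congrFun (congrFun hsym i) j
    simpa [Matrix.transpose_apply] using this
  have key : ∀ k : Matrix (Fin 4) (Fin 4) ℝ, D h k = -(1/2) * (
      2*h 0 0*k 0 0 - h 0 1*(k 0 1 + k 1 0) - h 0 2*(k 0 2 + k 2 0) - h 0 3*(k 0 3 + k 3 0)
      - h 1 0*(k 1 0 + k 0 1) + 2*h 1 1*k 1 1 + h 1 2*(k 1 2 + k 2 1) + h 1 3*(k 1 3 + k 3 1)
      - h 2 0*(k 2 0 + k 0 2) + h 2 1*(k 2 1 + k 1 2) + 2*h 2 2*k 2 2 + h 2 3*(k 2 3 + k 3 2)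
      - h 3 0*(k 3 0 + k 0 3) + h 3 1*(k 3 1 + k 1 3) + h 3 2*(k 3 2 + k 2 3) + 2*h 3 3*k 3 3
      - (h 0 0 - h 1 1 - h 2 2 - h 3 3)*(k 0 0 - k 1 1 - k 2 2 - k 3 3)) := by
    intro k
    rw [hD]
    simp only [Fin.sum_univ_four, Fin.reduceEq, reduceIte, neg_mul, one_mul, zero_mul,
      mul_zero, mul_one, mul_neg, neg_neg, add_zero, zero_add, sub_zero, zero_sub, neg_zero]
    ring
  set kk : Fin 4 → Fin 4 → Matrix (Fin 4) (Fin 4) ℝ :=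
    fun a b ρ σ => (if ρ = a ∧ σ = b then (1:ℝ) else 0) + (if ρ = b ∧ σ = a then 1 else 0)
    with hkk
  have ksym : ∀ a b, (kk a b).IsSymm := by
    intro a b
    ext i j
    simp only [hkk, Matrix.transpose_apply]
    show (if j = a ∧ i = b then (1:ℝ) else 0) + (if j = b ∧ i = a then 1 else 0) = _
    rw [add_comm]
    congr 1 <;> simp [and_comm]
  have E : ∀ a b, D h (kk a b) = 0 := fun a b => hk (kk a b) (ksym a b)
  have e00 := E 0 0; have e11 := E 1 1; have e22 := E 2 2; have e33 := E 3 3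
  have e01 := E 0 1; have e02 := E 0 2; have e03 := E 0 3
  have e12 := E 1 2; have e13 := E 1 3; have e23 := E 2 3
  rw [key] at e00 e11 e22 e33 e01 e02 e03 e12 e13 e23
  simp only [hkk, Fin.reduceEq, reduceIte, and_true, and_false, true_and, false_and,
    and_self, if_true, if_false, add_zero, zero_add] at e00 e11 e22 e33 e01 e02 e03 e12 e13 e23
  ring_nf at e00 e11 e22 e33 e01 e02 e03 e12 e13 e23
  have s01 := hs 0 1; have s02 := hs 0 2; have s03 := hs 0 3
  have s12 := hs 1 2; have s13 := hs 1 3; have s23 := hs 2 3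
  have p00 : h 0 0 = 0 := by linarith
  have p01 : h 0 1 = 0 := by linarith
  have p02 : h 0 2 = 0 := by linarith
  have p03 : h 0 3 = 0 := by linarith
  have p10 : h 1 0 = 0 := by linarith
  have p11 : h 1 1 = 0 := by linarith
  have p12 : h 1 2 = 0 := by linarith
  have p13 : h 1 3 = 0 := by linarith
  have p20 : h 2 0 = 0 := by linarith
  have p21 : h 2 1 = 0 := by linarith
  have p22 : h 2 2 = 0 := by linarith
  have p23 : h 2 3 = 0 := by linarith
  have p30 : h 3 0 = 0 := by linarith
  have p31 : h 3 1 = 0 := by linarith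
  have p32 : h 3 2 = 0 := by linarith
  have p33 : h 3 3 = 0 := by linarith
  ext i j
  fin_cases i <;> fin_cases j
  · exact p00
  · exact p01
  · exact p02
  · exact p03
  · exact p10
  · exact p11
  · exact p12
  · exact p13
  · exact p20
  · exact p21
  · exact p22
  · exact p23
  · exact p30
  · exact p31
  · exact p32
  · exact p33
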